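/- Let G : ({0,1}³)^m → {0,1}^m be the blockwise Index map and let μ, ν be probability distributions on ({0,1}³)^m. Then for every natural number k, Δ_k(G#μ, G#ν) ≤ Δ_{2k}(μ, ν). Equivalently, with k' = ⌊k/2⌋, one has Δ_{k'}(G#μ, G#ν) ≤ Δ_k(μ, ν). -/

import Mathlib

open MvPolynomial

/-- Embed a Boolean point of the cube into `ℝ^ι`. -/
def boolToReal {ι : Type*} (x : ι → Bool) : ι → ℝ := fun i => if x i then 1 else 0

/-- Expectation of a real polynomial test under a distribution on the Boolean cube. -/
noncomputable def pmfExp {ι : Type*} [Fintype ι] [DecidableEq ι]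
    (μ : PMF (ι → Bool)) (p : MvPolynomial ι ℝ) : ℝ :=
  ∑ x : ι → Bool, (μ x).toReal * eval (boolToReal x) p

/-- The degree-`k` test discrepancy between two distributions on the Boolean cube:
the supremum of `|E_μ[p] − E_ν[p]|` over real polynomials `p` of total degree ≤ `k`
with `|p| ≤ 1` on the cube. -/
noncomputable def Deltak {ι : Type*} [Fintype ι] [DecidableEq ι]
    (k : ℕ) (μ ν : PMF (ι → Bool)) : ℝ :=
  sSup {d : ℝ | ∃ p : MvPolynomial ι ℝ, p.totalDegree ≤ k ∧
    (∀ x : ι → Bool, |eval (boolToReal x) p| ≤ 1) ∧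
    d = |pmfExp μ p - pmfExp ν p|}

/-- The blockwise Index map on the Boolean cube: the `j`-th block is
`(u_j, v₀ⱼ, v₁ⱼ)` and the `j`-th output is `v₀ⱼ` if `u_j = 0` and `v₁ⱼ` if `u_j = 1`. -/
def indexMapBool (m : ℕ) (x : Fin m × Fin 3 → Bool) : Fin m → Bool :=
  fun j => if x (j, 0) then x (j, 2) else x (j, 1)

/-! ### Auxiliary lemmas -/

section Aux

variable {ι : Type*} [Fintype ι] [DecidableEq ι]

lemma pmf_sum_toReal (μ : PMF (ι → Bool)) : ∑ x : ι → Bool, (μ x).toReal = 1 := by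
  rw [← ENNReal.toReal_sum (fun a _ => μ.apply_ne_top a), ← tsum_fintype (L := .unconditional _), μ.tsum_coe,
    ENNReal.toReal_one]

lemma abs_pmfExp_le (μ : PMF (ι → Bool)) {p : MvPolynomial ι ℝ}
    (hp : ∀ x : ι → Bool, |eval (boolToReal x) p| ≤ 1) : |pmfExp μ p| ≤ 1 := by
  calc |pmfExp μ p| ≤ ∑ x : ι → Bool, |(μ x).toReal * eval (boolToReal x) p| :=
        Finset.abs_sum_le_sum_abs _ _
    _ ≤ ∑ x : ι → Bool, (μ x).toReal := by
        refine Finset.sum_le_sum fun x _ => ?_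
        rw [abs_mul, abs_of_nonneg ENNReal.toReal_nonneg]
        exact mul_le_of_le_one_right ENNReal.toReal_nonneg (hp x)
    _ = 1 := pmf_sum_toReal μ

lemma DSet_zero_mem (k : ℕ) (μ ν : PMF (ι → Bool)) :
    (0 : ℝ) ∈ {d : ℝ | ∃ p : MvPolynomial ι ℝ, p.totalDegree ≤ k ∧
      (∀ x : ι → Bool, |eval (boolToReal x) p| ≤ 1) ∧
      d = |pmfExp μ p - pmfExp ν p|} :=
  ⟨0, by simp, fun x => by simp, by simp [pmfExp]⟩

lemma DSet_bddAbove (k : ℕ) (μ ν : PMF (ι → Bool)) :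
    BddAbove {d : ℝ | ∃ p : MvPolynomial ι ℝ, p.totalDegree ≤ k ∧
      (∀ x : ι → Bool, |eval (boolToReal x) p| ≤ 1) ∧
      d = |pmfExp μ p - pmfExp ν p|} := by
  refine ⟨2, fun d hd => ?_⟩
  obtain ⟨p, -, hb, rfl⟩ := hd
  calc |pmfExp μ p - pmfExp ν p| ≤ |pmfExp μ p| + |pmfExp ν p| := abs_sub _ _
    _ ≤ 1 + 1 := add_le_add (abs_pmfExp_le μ hb) (abs_pmfExp_le ν hb)
    _ = 2 := by norm_num

lemma Deltak_mono {k₁ k₂ : ℕ} (h : k₁ ≤ k₂) (μ ν : PMF (ι → Bool)) :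
    Deltak k₁ μ ν ≤ Deltak k₂ μ ν := by
  refine csSup_le_csSup (DSet_bddAbove k₂ μ ν) ⟨0, DSet_zero_mem k₁ μ ν⟩ ?_
  rintro d ⟨p, hdeg, hb, rfl⟩
  exact ⟨p, hdeg.trans h, hb, rfl⟩

end Aux

/-- The Index gadget as a quadratic polynomial, one per block. -/
noncomputable def gadgetPoly (m : ℕ) : Fin m → MvPolynomial (Fin m × Fin 3) ℝ :=
  fun j => (1 - X (j, 0)) * X (j, 1) + X (j, 0) * X (j, 2)

lemma gadgetPoly_totalDegree_le (m : ℕ) (j : Fin m) :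
    (gadgetPoly m j).totalDegree ≤ 2 := by
  refine (totalDegree_add _ _).trans (max_le ?_ ?_)
  · refine (totalDegree_mul _ _).trans ?_
    have h1 : (1 - X ((j, 0) : Fin m × Fin 3) : MvPolynomial (Fin m × Fin 3) ℝ).totalDegree ≤ 1 :=
      (totalDegree_sub _ _).trans (max_le (by simp) (totalDegree_X _).le)
    have h2 := (totalDegree_X ((j, 1) : Fin m × Fin 3) (R := ℝ)).le
    omega
  · refine (totalDegree_mul _ _).trans ?_
    have h1 := (totalDegree_X ((j, 0) : Fin m × Fin 3) (R := ℝ)).le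
    have h2 := (totalDegree_X ((j, 2) : Fin m × Fin 3) (R := ℝ)).le
    omega

lemma eval_eq_aeval {σ : Type*} (f : σ → ℝ) (p : MvPolynomial σ ℝ) :
    eval f p = aeval f p := by
  rw [aeval_def, Algebra.algebraMap_self]; rfl

lemma eval_gadgetPoly (m : ℕ) (x : Fin m × Fin 3 → Bool) (j : Fin m) :
    eval (boolToReal x) (gadgetPoly m j) = boolToReal (indexMapBool m x) j := by
  cases h0 : x (j, 0) <;> cases h1 : x (j, 1) <;> cases h2 : x (j, 2) <;>
    simp [gadgetPoly, boolToReal, indexMapBool, h0, h1, h2]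

lemma eval_bind_gadget (m : ℕ) (x : Fin m × Fin 3 → Bool) (p : MvPolynomial (Fin m) ℝ) :
    eval (boolToReal x) (bind₁ (gadgetPoly m) p) = eval (boolToReal (indexMapBool m x)) p := by
  have hfun : (fun j => aeval (boolToReal x) (gadgetPoly m j)) = boolToReal (indexMapBool m x) := by
    funext j
    rw [← eval_eq_aeval]
    exact eval_gadgetPoly m x j
  rw [eval_eq_aeval, aeval_bind₁, hfun, ← eval_eq_aeval]

lemma totalDegree_bind_gadget_le (m : ℕ) (p : MvPolynomial (Fin m) ℝ) :
    (bind₁ (gadgetPoly m) p).totalDegree ≤ 2 * p.totalDegree := by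
  conv_lhs => rw [p.as_sum, map_sum]
  refine totalDegree_finsetSum_le fun d hd => ?_
  rw [bind₁_monomial]
  refine (totalDegree_mul _ _).trans ?_
  rw [totalDegree_C, zero_add]
  calc (∏ i ∈ d.support, gadgetPoly m i ^ d i).totalDegree
      ≤ ∑ i ∈ d.support, (gadgetPoly m i ^ d i).totalDegree := totalDegree_finset_prod _ _
    _ ≤ ∑ i ∈ d.support, 2 * d i := by
        refine Finset.sum_le_sum fun i _ => ?_
        calc (gadgetPoly m i ^ d i).totalDegree ≤ d i * (gadgetPoly m i).totalDegree :=
              totalDegree_pow _ _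
          _ ≤ d i * 2 := Nat.mul_le_mul_left _ (gadgetPoly_totalDegree_le m i)
          _ = 2 * d i := Nat.mul_comm _ _
    _ = 2 * ∑ i ∈ d.support, d i := by rw [Finset.mul_sum]
    _ ≤ 2 * p.totalDegree := Nat.mul_le_mul_left _ (le_totalDegree hd)

lemma pmfExp_map (m : ℕ) (μ : PMF (Fin m × Fin 3 → Bool)) (p : MvPolynomial (Fin m) ℝ) :
    pmfExp (μ.map (indexMapBool m)) p = pmfExp μ (bind₁ (gadgetPoly m) p) := by
  unfold pmfExp
  have step : ∀ y : Fin m → Bool,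
      ((μ.map (indexMapBool m)) y).toReal * eval (boolToReal y) p =
        ∑ x : Fin m × Fin 3 → Bool,
          (if y = indexMapBool m x then (μ x).toReal else 0) * eval (boolToReal y) p := by
    intro y
    rw [PMF.map_apply, tsum_fintype, ENNReal.toReal_sum, Finset.sum_mul]
    · congr 1
      funext x
      split <;> simp
    · intro a _
      split <;> simp [μ.apply_ne_top a]
  calc ∑ y : Fin m → Bool, ((μ.map (indexMapBool m)) y).toReal * eval (boolToReal y) p
      = ∑ y : Fin m → Bool, ∑ x : Fin m × Fin 3 → Bool,
          (if y = indexMapBool m x then (μ x).toReal else 0) * eval (boolToReal y) p :=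
        Finset.sum_congr rfl fun y _ => step y
    _ = ∑ x : Fin m × Fin 3 → Bool, ∑ y : Fin m → Bool,
          (if y = indexMapBool m x then (μ x).toReal else 0) * eval (boolToReal y) p :=
        Finset.sum_comm
    _ = ∑ x : Fin m × Fin 3 → Bool, (μ x).toReal * eval (boolToReal x) (bind₁ (gadgetPoly m) p) := by
        refine Finset.sum_congr rfl fun x _ => ?_
        rw [eval_bind_gadget]
        simp [ite_mul]

/-- Index monotonicity of the low-degree discrepancy: pushing forward along the
blockwise Index map, degree-`k` discrepancy is controlled by degree-`2k` discrepancy;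
equivalently, with `k' = ⌊k/2⌋`, degree-`k'` output discrepancy is at most the
degree-`k` input discrepancy. -/
theorem index_discrepancy_monotone (m : ℕ) (μ ν : PMF (Fin m × Fin 3 → Bool)) :
    ∀ k : ℕ,
      Deltak k (μ.map (indexMapBool m)) (ν.map (indexMapBool m)) ≤ Deltak (2 * k) μ ν ∧
      Deltak (k / 2) (μ.map (indexMapBool m)) (ν.map (indexMapBool m)) ≤ Deltak k μ ν := by
  have main : ∀ k : ℕ,
      Deltak k (μ.map (indexMapBool m)) (ν.map (indexMapBool m)) ≤ Deltak (2 * k) μ ν := by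
    intro k
    unfold Deltak
    refine csSup_le ⟨0, DSet_zero_mem k _ _⟩ ?_
    rintro d ⟨p, hdeg, hb, rfl⟩
    refine le_csSup (DSet_bddAbove (2 * k) μ ν) ?_
    refine ⟨bind₁ (gadgetPoly m) p, ?_, ?_, ?_⟩
    · exact (totalDegree_bind_gadget_le m p).trans (Nat.mul_le_mul_left 2 hdeg)
    · intro x
      rw [eval_bind_gadget]
      exact hb _
    · rw [pmfExp_map m μ p, pmfExp_map m ν p]
  intro k
  refine ⟨main k, (main (k / 2)).trans (Deltak_mono (by omega) μ ν)⟩
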